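/- arXiv:2509.00436 — 2 statements merged into one kernel-verified Lean document; each statement's English description precedes it below -/
import Mathlib

section
/- For every n ≥ 1, the map θ sending p ∈ PK(n) to the nondecreasing rearrangement of the concatenation of p with the list of all j ∈ {1,…,mn−m+1} satisfying j ≢ 1 (mod m) is a bijection from PK(n) onto PKcat(n), the set of parking distributions on the m-caterpillar of length n. -/
open scoped Classical
open Finset

noncomputable section

/-- The set of positive nondecreasing sequences of length `n` bounded above by `b` is finite. -/
lemma boundedSeq_finite (n : ℕ) (b : ℕ → ℕ) :
    {p : Fin n → ℕ | Monotone p ∧ ∀ i : Fin n, 1 ≤ p i ∧ p i ≤ b i}.Finite := by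
  have h : {p : Fin n → ℕ | Monotone p ∧ ∀ i : Fin n, 1 ≤ p i ∧ p i ≤ b i} ⊆
      Set.pi Set.univ (fun i : Fin n => Set.Iic (b i)) := by
    intro p hp
    rw [Set.mem_pi]
    intro i _
    exact (hp.2 i).2
  exact (Set.Finite.pi fun i : Fin n => Set.finite_Iic (b (i : ℕ))).subset h

/-- The finset of nondecreasing sequences `p : Fin n → ℕ` of positive integers
with `p i ≤ b i` for all `i`. -/
def BSeq (n : ℕ) (b : ℕ → ℕ) : Finset (Fin n → ℕ) := (boundedSeq_finite n b).toFinset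

/-- `PK m n` : the u-parking distributions of length `n`, i.e. nondecreasing sequences
of positive integers with `p i ≤ m*(i-1)+1` (here indexed from `0`, so `p i ≤ m*i+1`). -/
def PK (m n : ℕ) : Finset (Fin n → ℕ) := BSeq n (fun i => m * i + 1)

/-- `luck p` : the number of indices `i` with `p i = m*(i-1)+1` (0-indexed: `m*i+1`). -/
def luck (m : ℕ) {n : ℕ} (p : Fin n → ℕ) : ℕ :=
  (Finset.univ.filter (fun i : Fin n => p i = m * (i : ℕ) + 1)).card

/-- `freq j p` = `ω_j(p)` : the number of indices `i` with `p i = j`. -/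
def freq (j : ℕ) {n : ℕ} (p : Fin n → ℕ) : ℕ :=
  (Finset.univ.filter (fun i : Fin n => p i = j)).card

/-- `hcnt m n k r` = `h_{n,k,r}` : the number of nondecreasing sequences of positive
integers with `p_i ≤ m*(i+k-1) - r` for `1 ≤ i ≤ n` (0-indexed: `p i ≤ m*(i+k) - r`). -/
def hcnt (m n k r : ℕ) : ℕ := (BSeq n (fun i => m * (i + k) - r)).card

/-- `Cnt m n k` = `C_{n,k}` : the number of `p ∈ PK m n` with `luck p = k`. -/
def Cnt (m n k : ℕ) : ℕ := ((PK m n).filter (fun p => luck m p = k)).card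

/-- `Rpoly m n` = `R_n(q) = Σ_k C_{n,k} q^k ∈ ℤ[q]`. -/
def Rpoly (m n : ℕ) : Polynomial ℤ :=
  ∑ k ∈ Finset.range (n + 1), (Cnt m n k : Polynomial ℤ) * Polynomial.X ^ k

/-- `hfull t k` : the complete homogeneous symmetric polynomial of degree `k`
in variables `q_0, …, q_{t-1}`, i.e. the sum of all monomials of total degree `k`. -/
def hfull (t k : ℕ) : MvPolynomial (Fin t) ℤ :=
  ∑ α ∈ Finset.Nat.antidiagonalTuple t k, ∏ i : Fin t, MvPolynomial.X i ^ α i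

/-- `ffix m p ℓ` = `i_ℓ(p)` : the first fixed point of type `ℓ`, the smallest `k` with
`2 ≤ k ≤ n` and `p_k ≥ m*(k-2)+1+ℓ` (1-indexed), or `n+1` if there is none. -/
def ffix (m : ℕ) {n : ℕ} (p : Fin n → ℕ) (ℓ : ℕ) : ℕ :=
  sInf ({k | 2 ≤ k ∧ ∃ i : Fin n, (i : ℕ) + 1 = k ∧ m * (k - 2) + 1 + ℓ ≤ p i} ∪ {n + 1})

/-- The extended first fixed points: `i_0 = 2`, `i_{m+1} = n+1`, and `i_ℓ = ffix m p ℓ`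
for `1 ≤ ℓ ≤ m`. -/
def ffixE (m : ℕ) {n : ℕ} (p : Fin n → ℕ) (j : ℕ) : ℕ :=
  if j = 0 then 2 else if j = m + 1 then n + 1 else ffix m p j

/-- `pget p k` = `p_k` (1-indexed), `0` out of range. -/
def pget {n : ℕ} (p : Fin n → ℕ) (k : ℕ) : ℕ := if h : k - 1 < n then p ⟨k - 1, h⟩ else 0

/-- The `(ℓ+1)`-st part `P_{ℓ+1}` (for `0 ≤ ℓ ≤ m`) of the first-return decomposition of `p`:
the list `(p_k - (p_{i_ℓ} - 1))` for `i_ℓ ≤ k ≤ i_{ℓ+1} - 1`. -/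
def FRD (m : ℕ) {n : ℕ} (p : Fin n → ℕ) (ℓ : ℕ) : List ℕ :=
  (List.range (ffixE m p (ℓ + 1) - ffixE m p ℓ)).map
    (fun t => pget p (ffixE m p ℓ + t) - (pget p (ffixE m p ℓ) - 1))

/-- A list is a u-parking distribution: nondecreasing, with `l.get i ∈ [1, m*i+1]`
(0-indexed). -/
def isPKlist (m : ℕ) (l : List ℕ) : Prop :=
  l.Pairwise (· ≤ ·) ∧ ∀ i : Fin l.length, 1 ≤ l.get i ∧ l.get i ≤ m * (i : ℕ) + 1

/-- `θ(p)` : the nondecreasing rearrangement of the concatenation of `p` with the list of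
all `j ∈ {1, …, m*n-m+1}` with `j ≢ 1 (mod m)`. -/
def theta (m n : ℕ) (p : Fin n → ℕ) : List ℕ :=
  Multiset.sort
    ((List.ofFn p : Multiset ℕ) +
      ((((List.range (m * n - m + 1)).map (· + 1)).filter
        (fun j => ¬ j ≡ 1 [MOD m]) : List ℕ) : Multiset ℕ)) (· ≤ ·)

/-- Parking distributions on the `m`-caterpillar of length `n`, as nondecreasing lists. -/
def PKcat (m n : ℕ) : Set (List ℕ) :=
  {a | a.length = m * n - m + 1 ∧ a.Pairwise (· ≤ ·) ∧
       (∀ x ∈ a, 1 ≤ x ∧ x ≤ m * n - m + 1) ∧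
       (∀ i : ℕ, 1 ≤ i → i ≤ n →
         m * (i - 1) + 1 ≤ (a.filter (fun x => x ≤ m * (i - 1) + 1)).length) ∧
       (∀ j : ℕ, 1 ≤ j → j ≤ m * n - m + 1 → ¬ j ≡ 1 [MOD m] → j ∈ a)}

section Aux

/-- In the length-`m` window `m*c+2, …, m*c+m+1`, exactly one value is `≡ 1 [MOD m]`. -/
lemma window_count {m : ℕ} (hm : 1 ≤ m) (c : ℕ) :
    (List.range m).countP (fun t => decide ((m * c + 1 + t + 1) % m = 1 % m)) = 1 := by
  have key : ∀ t ∈ List.range m,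
      (decide ((m * c + 1 + t + 1) % m = 1 % m) = true) ↔ ((t == m - 1) = true) := by
    intro t ht
    have htm : t < m := List.mem_range.mp ht
    simp only [decide_eq_true_eq, beq_iff_eq]
    constructor
    · intro h
      have h2' : m * c + 1 + t + 1 = m * c + (t + 2) := by ring
      rw [h2', Nat.mul_add_mod] at h
      have hdvd : m ∣ t + 2 - 1 := (Nat.modEq_iff_dvd' (by omega)).mp h.symm
      have hdvd' : m ∣ t + 1 := by simpa using hdvd
      have := Nat.le_of_dvd (by omega) hdvd'
      omega
    · intro h
      have h2 : m * c + 1 + t + 1 = m * (c + 1) + 1 := by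
        have h3 : m * (c + 1) = m * c + m := by ring
        omega
      rw [h2, Nat.mul_add_mod]
  rw [List.countP_congr key]
  have hcnt : (List.range m).count (m - 1) = 1 :=
    List.count_eq_one_of_mem List.nodup_range (List.mem_range.mpr (by omega))
  exact hcnt

/-- Among `1, …, m*i+1` there are exactly `i+1` values `≡ 1 [MOD m]`. -/
lemma countP_range_modeq {m : ℕ} (hm : 1 ≤ m) (i : ℕ) :
    (List.range (m * i + 1)).countP (fun t => decide ((t + 1) % m = 1 % m)) = i + 1 := by
  induction i with
  | zero => simp [List.range_succ, List.countP_cons]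
  | succ i ih =>
    have hr : m * (i + 1) + 1 = (m * i + 1) + m := by ring
    rw [hr, List.range_add, List.countP_append, ih, List.countP_map]
    have hcomp : ((fun t => decide ((t + 1) % m = 1 % m)) ∘ (fun x => m * i + 1 + x))
        = fun t => decide ((m * i + 1 + t + 1) % m = 1 % m) := rfl
    rw [hcomp, window_count hm i]

lemma countP_range_lt (k n : ℕ) :
    (List.range n).countP (fun t => decide (t < k)) = min k n := by
  induction n with
  | zero => simp
  | succ n ih =>
    rw [List.range_succ, List.countP_append, ih]
    by_cases h : n < k <;> simp [List.countP_cons, h] <;> omega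

lemma countP_finRange_lt (n k : ℕ) :
    (List.finRange n).countP (fun j : Fin n => decide ((j : ℕ) < k)) = min k n := by
  have h : (fun j : Fin n => decide ((j : ℕ) < k)) = (fun t => decide (t < k)) ∘ Fin.val := rfl
  rw [h, ← List.countP_map, (show List.map Fin.val (List.finRange n) = List.range n from List.ext_getElem (by simp) (by simp)), countP_range_lt]

/-- The filler list of `theta`. -/
def fl (m n : ℕ) : List ℕ :=
  ((List.range (m * n - m + 1)).map (· + 1)).filter (fun j => ¬ j ≡ 1 [MOD m])

lemma theta_def (m n : ℕ) (p : Fin n → ℕ) :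
    theta m n p = Multiset.sort ((List.ofFn p : Multiset ℕ) + (fl m n : Multiset ℕ)) (· ≤ ·) := rfl

lemma mem_fl {m n j : ℕ} :
    j ∈ fl m n ↔ 1 ≤ j ∧ j ≤ m * n - m + 1 ∧ ¬ j ≡ 1 [MOD m] := by
  simp only [fl, List.mem_filter, List.mem_map, List.mem_range, decide_eq_true_eq]
  constructor
  · rintro ⟨⟨t, ht, rfl⟩, h2⟩
    exact ⟨by omega, by omega, h2⟩
  · rintro ⟨h1, h2, h3⟩
    exact ⟨⟨j - 1, by omega, by omega⟩, h3⟩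

lemma fl_nodup (m n : ℕ) : (fl m n).Nodup := by
  apply List.Nodup.filter
  exact List.nodup_range.map (fun a b hab => by omega)

/-- Count of filler entries `≤ m*i+1`, for `i < n`. -/
lemma fl_countP_le {m n : ℕ} (hm : 1 ≤ m) (hn : 1 ≤ n) {i : ℕ} (hi : i < n) :
    (fl m n).countP (fun x => decide (x ≤ m * i + 1)) = m * i - i := by
  obtain ⟨n', rfl⟩ : ∃ k, n = k + 1 := ⟨n - 1, by omega⟩
  have hmul : m * (n' + 1) = m * n' + m := by ring
  have hNn : m * (n' + 1) - m + 1 = m * n' + 1 := by omega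
  have hin : i ≤ n' := by omega
  have hle : m * i ≤ m * n' := Nat.mul_le_mul_left m hin
  have hbase : (fl m (n' + 1)).countP (fun x => decide (x ≤ m * i + 1))
      = (List.range (m * n' + 1)).countP
        (fun t => decide (t + 1 ≤ m * i + 1) && decide (¬ (t + 1) ≡ 1 [MOD m])) := by
    rw [fl, List.countP_filter, List.countP_map, hNn]
    rfl
  rw [hbase]
  have hsplit : m * n' + 1 = (m * i + 1) + (m * n' - m * i) := by omega
  rw [hsplit, List.range_add, List.countP_append, List.countP_map]
  have h2 : List.countP
      ((fun t => decide (t + 1 ≤ m * i + 1) && decide (¬ (t + 1) ≡ 1 [MOD m]))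
        ∘ fun x => m * i + 1 + x) (List.range (m * n' - m * i)) = 0 := by
    rw [List.countP_eq_zero]
    intro x hx h
    simp only [Function.comp_apply, Bool.and_eq_true, decide_eq_true_eq] at h
    omega
  rw [h2, Nat.add_zero]
  have hcongr : ∀ t ∈ List.range (m * i + 1),
      ((fun t => decide (t + 1 ≤ m * i + 1) && decide (¬ (t + 1) ≡ 1 [MOD m])) t = true)
      ↔ ((fun a => decide ¬(decide ((a + 1) % m = 1 % m) = true)) t = true) := by
    intro t ht
    have htm := List.mem_range.mp ht
    simp only [Bool.and_eq_true, decide_eq_true_eq, Nat.ModEq]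
    constructor
    · rintro ⟨-, h⟩
      exact decide_eq_true_iff.mp h
    · intro h
      exact ⟨by omega, decide_eq_true_iff.mpr h⟩
  rw [List.countP_congr hcongr]
  have hlen := List.length_eq_countP_add_countP
      (fun s => decide ((s + 1) % m = 1 % m)) (l := List.range (m * i + 1))
  rw [List.length_range, countP_range_modeq hm i] at hlen
  have hmi : i ≤ m * i := Nat.le_mul_of_pos_left i hm
  set A := m * i with hA
  clear_value A
  omega

lemma fl_length {m n : ℕ} (hm : 1 ≤ m) (hn : 1 ≤ n) :
    (fl m n).length + n = m * n - m + 1 := by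
  obtain ⟨n', rfl⟩ : ∃ k, n = k + 1 := ⟨n - 1, by omega⟩
  have hmul : m * (n' + 1) = m * n' + m := by ring
  have hNn : m * (n' + 1) - m + 1 = m * n' + 1 := by omega
  have hall : (fl m (n' + 1)).countP (fun x => decide (x ≤ m * n' + 1))
      = (fl m (n' + 1)).length := by
    rw [List.countP_eq_length]
    intro a ha
    have := mem_fl.mp ha
    simp only [decide_eq_true_eq]
    omega
  have hcnt := fl_countP_le (n := n' + 1) hm (by omega) (i := n') (by omega)
  have hmi : n' ≤ m * n' := Nat.le_mul_of_pos_left n' hm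
  set A := m * n' with hA
  clear_value A
  omega

lemma mem_PK {m n : ℕ} {p : Fin n → ℕ} :
    p ∈ PK m n ↔ Monotone p ∧ ∀ i : Fin n, 1 ≤ p i ∧ p i ≤ m * (i : ℕ) + 1 := by
  rw [PK, BSeq, Set.Finite.mem_toFinset, Set.mem_setOf_eq]

lemma sorted_ofFn {n : ℕ} {p : Fin n → ℕ} (hp : Monotone p) :
    (List.ofFn p).Pairwise (· ≤ ·) := by
  rw [List.ofFn_eq_map]
  exact (List.pairwise_lt_finRange n).map p (fun a b hab => hp hab.le)

/-- If a sorted list has at least `i+1` entries `≤ B`, then its `i`-th entry is `≤ B`. -/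
lemma sorted_get_le_of_countP {l : List ℕ} (hs : l.Pairwise (· ≤ ·)) {B i : ℕ}
    (hi : i < l.length) (hcnt : i + 1 ≤ l.countP (fun x => decide (x ≤ B))) :
    l.get ⟨i, hi⟩ ≤ B := by
  by_contra hB
  push_neg at hB
  have hpos : ∀ j : Fin l.length, l.get j ≤ B → (j : ℕ) < i := by
    intro j hj
    by_contra hji
    push_neg at hji
    have : l.get ⟨i, hi⟩ ≤ l.get j := hs.rel_get_of_le (by exact hji)
    omega
  have hle : l.countP (fun x => decide (x ≤ B)) ≤ i := by
    conv_lhs => rw [← List.ofFn_get l, List.ofFn_eq_map, List.countP_map]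
    calc List.countP ((fun x => decide (x ≤ B)) ∘ l.get) (List.finRange l.length)
        ≤ List.countP (fun j : Fin l.length => decide ((j : ℕ) < i))
            (List.finRange l.length) := by
          apply List.countP_mono_left
          intro j _ hj
          simp only [Function.comp, decide_eq_true_eq] at hj ⊢
          exact hpos j hj
      _ = min i l.length := countP_finRange_lt _ _
      _ ≤ i := min_le_left _ _
  omega

end Aux

theorem stmt1 (m : ℕ) (hm : 1 ≤ m) (n : ℕ) (hn : 1 ≤ n) :
    Set.BijOn (theta m n) (↑(PK m n)) (PKcat m n) := by
  obtain ⟨n', rfl⟩ : ∃ k, n = k + 1 := ⟨n - 1, by omega⟩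
  have hmul : m * (n' + 1) = m * n' + m := by ring
  have hN : m * (n' + 1) - m + 1 = m * n' + 1 := by omega
  have hperm : ∀ p : Fin (n' + 1) → ℕ,
      (theta m (n' + 1) p).Perm (List.ofFn p ++ fl m (n' + 1)) := by
    intro p
    rw [← Multiset.coe_eq_coe, theta_def, Multiset.sort_eq, ← Multiset.coe_add]
  refine ⟨?_, ?_, ?_⟩
  · -- MapsTo
    intro p hp
    rw [Finset.mem_coe, mem_PK] at hp
    obtain ⟨hmono, hbdd⟩ := hp
    have hperm' := hperm p
    refine ⟨?_, ?_, ?_, ?_, ?_⟩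
    · rw [hperm'.length_eq, List.length_append, List.length_ofFn]
      have := fl_length (m := m) (n := n' + 1) hm (by omega)
      omega
    · rw [theta_def]; exact Multiset.pairwise_sort _ _
    · intro x hx
      rw [hperm'.mem_iff, List.mem_append] at hx
      rcases hx with hx | hx
      · rw [List.mem_ofFn] at hx
        obtain ⟨i, rfl⟩ := hx
        have h1 := hbdd i
        have h2 : (i : ℕ) ≤ n' := Nat.lt_succ_iff.mp i.isLt
        have h3 : m * (i : ℕ) ≤ m * n' := Nat.mul_le_mul_left m h2
        omega
      · have := mem_fl.mp hx
        omega
    · intro i' h1 h2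
      set i := i' - 1 with hidef
      have hi : i ≤ n' := by omega
      rw [← List.countP_eq_length_filter, hperm'.countP_eq, List.countP_append]
      have hfl := fl_countP_le (m := m) (n := n' + 1) hm (by omega) (i := i) (by omega)
      have hof : i + 1 ≤ (List.ofFn p).countP (fun x => decide (x ≤ m * i + 1)) := by
        rw [List.ofFn_eq_map, List.countP_map]
        have h4 : (List.finRange (n' + 1)).countP
            (fun j : Fin (n' + 1) => decide ((j : ℕ) < i + 1)) = i + 1 := by
          rw [countP_finRange_lt]; omega
        rw [← h4]
        apply List.countP_mono_left
        intro j _ hj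
        simp only [Function.comp, decide_eq_true_eq] at hj ⊢
        have h5 := (hbdd j).2
        have h6 : m * (j : ℕ) ≤ m * i := Nat.mul_le_mul_left m (by omega)
        omega
      have hmi : i ≤ m * i := Nat.le_mul_of_pos_left i hm
      set A := m * i with hA
      clear_value A
      omega
    · intro j h1 h2 h3
      rw [hperm'.mem_iff, List.mem_append]
      exact Or.inr (mem_fl.mpr ⟨h1, h2, h3⟩)
  · -- InjOn
    intro p hp q hq h
    have h1 : (List.ofFn p : Multiset ℕ) + ↑(fl m (n' + 1))
        = (List.ofFn q : Multiset ℕ) + ↑(fl m (n' + 1)) := by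
      have h0 := congrArg (fun t : List ℕ => (t : Multiset ℕ)) h
      simp only [theta_def, Multiset.sort_eq] at h0
      exact h0
    have h2 : (List.ofFn p : Multiset ℕ) = ↑(List.ofFn q) := add_right_cancel h1
    rw [Finset.mem_coe, mem_PK] at hp hq
    have h3 : List.ofFn p = List.ofFn q :=
      List.Perm.eq_of_pairwise' (sorted_ofFn hp.1) (sorted_ofFn hq.1) (Multiset.coe_eq_coe.mp h2)
    exact List.ofFn_injective h3
  · -- SurjOn
    intro a ha
    obtain ⟨hlen, hsort, hbd, hcount, hmemc⟩ := ha
    set F := fl m (n' + 1) with hF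
    have hFsub : ∀ j ∈ F, j ∈ a := by
      intro j hj
      have h := mem_fl.mp hj
      exact hmemc j h.1 h.2.1 h.2.2
    have hFle : (F : Multiset ℕ) ≤ (a : Multiset ℕ) := by
      rw [Multiset.le_iff_count]
      intro x
      by_cases hx : x ∈ F
      · have hc1 : Multiset.count x (F : Multiset ℕ) ≤ 1 :=
          Multiset.nodup_iff_count_le_one.mp (Multiset.coe_nodup.mpr (fl_nodup _ _)) x
        have hc2 : 1 ≤ Multiset.count x (a : Multiset ℕ) :=
          Multiset.one_le_count_iff_mem.mpr (by exact hFsub x hx)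
        omega
      · have hc0 : Multiset.count x (F : Multiset ℕ) = 0 :=
          Multiset.count_eq_zero.mpr (by simpa using hx)
        omega
    set s : Multiset ℕ := (a : Multiset ℕ) - ↑F with hs
    have hsF : s + ↑F = (a : Multiset ℕ) := tsub_add_cancel_of_le hFle
    have hFlen := fl_length (m := m) (n := n' + 1) hm (by omega)
    rw [← hF] at hFlen
    have hmn : n' ≤ m * n' := Nat.le_mul_of_pos_left n' hm
    have hcard : Multiset.card s = n' + 1 := by
      have h1 := Multiset.card_sub hFle
      rw [Multiset.coe_card, Multiset.coe_card, hlen] at h1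
      rw [hs, h1]
      omega
    set l := Multiset.sort s (· ≤ ·) with hl
    have hlcoe : (l : Multiset ℕ) = s := Multiset.sort_eq _ _
    have hlsorted : l.Pairwise (· ≤ ·) := Multiset.pairwise_sort _ _
    have hllen : l.length = n' + 1 := by
      rw [← Multiset.coe_card, hlcoe, hcard]
    have haperm : a.Perm (l ++ F) := by
      rw [← Multiset.coe_eq_coe, ← Multiset.coe_add, hlcoe, hsF]
    have hlcnt : ∀ i : ℕ, i ≤ n' → i + 1 ≤ l.countP (fun x => decide (x ≤ m * i + 1)) := by
      intro i hi
      have hc := hcount (i + 1) (by omega) (by omega)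
      rw [← List.countP_eq_length_filter] at hc
      have hc' : m * i + 1 ≤ a.countP (fun x => decide (x ≤ m * i + 1)) := by
        simpa using hc
      rw [haperm.countP_eq, List.countP_append] at hc'
      have hfl := fl_countP_le (m := m) (n := n' + 1) hm (by omega) (i := i) (by omega)
      rw [← hF] at hfl
      have hmi : i ≤ m * i := Nat.le_mul_of_pos_left i hm
      set A := m * i with hA
      clear_value A
      omega
    have hmem_l : ∀ x ∈ l, x ∈ a := by
      intro x hx
      have h1 : x ∈ s := by rw [← hlcoe]; exact Multiset.mem_coe.mpr hx
      have h2 : s ≤ (a : Multiset ℕ) := by rw [hs]; exact tsub_le_self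
      exact Multiset.mem_coe.mp (Multiset.mem_of_le h2 h1)
    refine ⟨fun i : Fin (n' + 1) => l.getD (i : ℕ) 0, ?_, ?_⟩
    · rw [Finset.mem_coe, mem_PK]
      have hget : ∀ i : Fin (n' + 1), l.getD (i : ℕ) 0 = l.get ⟨(i : ℕ), by omega⟩ :=
        fun i => List.getD_eq_getElem l 0 (by omega)
      constructor
      · intro i j hij
        show l.getD (i : ℕ) 0 ≤ l.getD (j : ℕ) 0
        rw [hget i, hget j]
        exact hlsorted.rel_get_of_le (Fin.mk_le_mk.mpr hij)
      · intro i
        show 1 ≤ l.getD (i : ℕ) 0 ∧ l.getD (i : ℕ) 0 ≤ m * (i : ℕ) + 1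
        rw [hget i]
        refine ⟨?_, ?_⟩
        · exact (hbd _ (hmem_l _ (List.get_mem l _))).1
        · exact sorted_get_le_of_countP hlsorted _ (hlcnt i (Nat.lt_succ_iff.mp i.isLt))
    · have hofFn : List.ofFn (fun i : Fin (n' + 1) => l.getD (i : ℕ) 0) = l := by
        apply List.ext_get (by simp [hllen])
        intro k h1 h2
        rw [List.get_ofFn]
        simp only [Fin.coe_cast]
        exact List.getD_eq_getElem l 0 h2
      rw [theta_def, hofFn]
      refine List.Perm.eq_of_pairwise' (Multiset.pairwise_sort _ _) hsort
        (Multiset.coe_eq_coe.mp ?_)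
      rw [Multiset.sort_eq, hlcoe, hsF]

end
end

section
/- The statistics luck and ω_1 have a symmetric joint distribution on PK(n): for all n ≥ 0 and all a, b ≥ 0, #{p ∈ PK(n) : luck(p) = a and ω_1(p) = b} = #{p ∈ PK(n) : luck(p) = b and ω_1(p) = a}. -/
open scoped Classical
open Finset

noncomputable section

namespace Stmt10Aux


/-- count of entries `≤ v` -/
def cnt {n : ℕ} (p : Fin n → ℕ) (v : ℕ) : ℕ := (Finset.univ.filter (fun i => p i ≤ v)).card

lemma cnt_mono {n : ℕ} (p : Fin n → ℕ) {v w : ℕ} (h : v ≤ w) : cnt p v ≤ cnt p w := by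
  apply Finset.card_le_card
  intro i hi
  simp only [Finset.mem_filter, Finset.mem_univ, true_and] at hi ⊢
  omega

lemma cnt_le {n : ℕ} (p : Fin n → ℕ) (v : ℕ) : cnt p v ≤ n := by
  calc cnt p v ≤ Finset.univ.card := Finset.card_filter_le _ _
  _ = n := by simp

lemma card_lt_filter {n : ℕ} (c : ℕ) (h : c ≤ n) :
    (Finset.univ.filter (fun i : Fin n => (i : ℕ) < c)).card = c := by
  have heq : (Finset.univ.filter (fun i : Fin n => (i : ℕ) < c)) =
      Finset.map (Fin.castLEOrderEmb h).toEmbedding Finset.univ := by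
    ext i
    simp only [Finset.mem_filter, Finset.mem_univ, true_and, Finset.mem_map]
    constructor
    · intro hi
      exact ⟨⟨(i : ℕ), hi⟩, Fin.ext rfl⟩
    · rintro ⟨a, -, rfl⟩
      exact a.isLt
  rw [heq]
  simp

lemma lt_cnt_iff {n : ℕ} {p : Fin n → ℕ} (hp : Monotone p) (v : ℕ) (i : Fin n) :
    p i ≤ v ↔ (i : ℕ) < cnt p v := by
  constructor
  · intro h
    have hsub : Finset.univ.filter (fun j : Fin n => (j : ℕ) < (i : ℕ) + 1) ⊆
        Finset.univ.filter (fun j => p j ≤ v) := by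
      intro j hj
      simp only [Finset.mem_filter, Finset.mem_univ, true_and] at hj ⊢
      exact le_trans (hp (show j ≤ i from Fin.le_def.mpr (by omega))) h
    have h2 := Finset.card_le_card hsub
    rw [card_lt_filter ((i : ℕ) + 1) i.isLt] at h2
    exact h2
  · intro h
    by_contra hc
    push_neg at hc
    have hsub : Finset.univ.filter (fun j : Fin n => p j ≤ v) ⊆
        Finset.univ.filter (fun j : Fin n => (j : ℕ) < (i : ℕ)) := by
      intro j hj
      simp only [Finset.mem_filter, Finset.mem_univ, true_and] at hj ⊢
      by_contra hji
      push_neg at hji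
      have := hp (show i ≤ j from Fin.le_def.mpr hji)
      omega
    have h2 := Finset.card_le_card hsub
    rw [card_lt_filter (i : ℕ) (le_of_lt i.isLt)] at h2
    unfold cnt at h
    omega


lemma mem_PK_iff {m n : ℕ} {p : Fin n → ℕ} :
    p ∈ PK m n ↔ Monotone p ∧ ∀ i : Fin n, 1 ≤ p i ∧ p i ≤ m * (i : ℕ) + 1 := by
  unfold PK BSeq
  rw [Set.Finite.mem_toFinset]
  exact Iff.rfl

lemma freq_eq_cnt {m n : ℕ} {p : Fin n → ℕ}
    (hpk : ∀ i : Fin n, 1 ≤ p i ∧ p i ≤ m * (i : ℕ) + 1) :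
    freq 1 p = cnt p 1 := by
  unfold freq cnt
  congr 1
  apply Finset.filter_congr
  intro i _
  have h1 := (hpk i).1
  constructor <;> intro <;> omega

lemma cnt_park {m n : ℕ} (hm : 1 ≤ m) {p : Fin n → ℕ}
    (hpk : ∀ i : Fin n, 1 ≤ p i ∧ p i ≤ m * (i : ℕ) + 1)
    {k : ℕ} (hk : k ≤ n) : k ≤ cnt p (m * k) := by
  have hsub : Finset.univ.filter (fun i : Fin n => (i : ℕ) < k) ⊆
      Finset.univ.filter (fun i => p i ≤ m * k) := by
    intro i hi
    simp only [Finset.mem_filter, Finset.mem_univ, true_and] at hi ⊢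
    have h2 := (hpk i).2
    have h3 : m * ((i : ℕ) + 1) ≤ m * k := Nat.mul_le_mul_left m hi
    have h4 : m * ((i : ℕ) + 1) = m * (i : ℕ) + m := Nat.mul_succ m (i : ℕ)
    omega
  have := Finset.card_le_card hsub
  rwa [card_lt_filter k hk] at this

lemma luck_pos_iff {m n : ℕ} {p : Fin n → ℕ} (hp : p ∈ PK m n) :
    0 < luck m p ↔ 0 < freq 1 p := by
  rw [mem_PK_iff] at hp
  obtain ⟨hmono, hpk⟩ := hp
  unfold luck freq
  simp only [Finset.card_pos, Finset.Nonempty]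
  have hzero : ∀ i : Fin n, (0 : ℕ) < n → True := fun _ _ => trivial
  constructor
  · rintro ⟨i, hi⟩
    have hn : 0 < n := lt_of_le_of_lt (Nat.zero_le _) i.isLt
    refine ⟨⟨0, hn⟩, ?_⟩
    simp only [Finset.mem_filter, Finset.mem_univ, true_and]
    have := hpk ⟨0, hn⟩
    simp only at this
    omega
  · rintro ⟨i, hi⟩
    have hn : 0 < n := lt_of_le_of_lt (Nat.zero_le _) i.isLt
    refine ⟨⟨0, hn⟩, ?_⟩
    simp only [Finset.mem_filter, Finset.mem_univ, true_and]
    have := hpk ⟨0, hn⟩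
    simp only at this
    omega

lemma exists_t1 {m n : ℕ} (hm : 1 ≤ m) {p : Fin n → ℕ}
    (hpk : ∀ i : Fin n, 1 ≤ p i ∧ p i ≤ m * (i : ℕ) + 1)
    (hb : 2 ≤ cnt p 1) : ∃ k, 1 ≤ k ∧ cnt p (m * k) = k + 1 := by
  have hn2 : 2 ≤ n := le_trans hb (cnt_le p 1)
  have hex : ∃ k, 1 ≤ k ∧ cnt p (m * k) ≤ k := ⟨n, by omega, cnt_le p _⟩
  have hspec := Nat.find_spec hex
  have hj1 : 1 ≤ Nat.find hex := hspec.1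
  have hj2 : cnt p (m * Nat.find hex) ≤ Nat.find hex := hspec.2
  have hj3 : 2 ≤ Nat.find hex := by
    rcases Nat.lt_or_ge (Nat.find hex) 2 with hcon | h
    · exfalso
      have hj1' : Nat.find hex = 1 := by omega
      have hmono := cnt_mono p (show (1 : ℕ) ≤ m * 1 by omega)
      rw [hj1'] at hj2
      omega
    · exact h
  refine ⟨Nat.find hex - 1, by omega, ?_⟩
  have hmin := Nat.find_min hex (show Nat.find hex - 1 < Nat.find hex by omega)
  have h4 : ¬ (cnt p (m * (Nat.find hex - 1)) ≤ Nat.find hex - 1) := fun h => hmin ⟨by omega, h⟩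
  have h5 : cnt p (m * (Nat.find hex - 1)) ≤ cnt p (m * Nat.find hex) :=
    cnt_mono p (Nat.mul_le_mul_left m (by omega))
  omega

lemma t1_lower {m n : ℕ} {p : Fin n → ℕ} (hb : 2 ≤ cnt p 1) (hm : 1 ≤ m)
    {t : ℕ} (hmin : ∀ k, k < t → ¬ (1 ≤ k ∧ cnt p (m * k) = k + 1)) :
    ∀ k, 1 ≤ k → k < t → k + 2 ≤ cnt p (m * k) := by
  intro k
  induction k using Nat.strong_induction_on with
  | _ k IH =>
    intro hk1 hkt
    have hne : cnt p (m * k) ≠ k + 1 := fun h => hmin k hkt ⟨hk1, h⟩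
    rcases Nat.lt_or_ge k 2 with hk2 | hk2
    · -- k = 1
      have hk1' : k = 1 := by omega
      subst hk1'
      have hmono := cnt_mono p (show (1 : ℕ) ≤ m * 1 by omega)
      omega
    · have hIH := IH (k - 1) (by omega) (by omega) (by omega)
      have hmono : cnt p (m * (k - 1)) ≤ cnt p (m * k) :=
        cnt_mono p (Nat.mul_le_mul_left m (by omega))
      omega

lemma exists_t2 {m n : ℕ} (hm : 1 ≤ m) {p : Fin n → ℕ} (hmono : Monotone p)
    (hpk : ∀ i : Fin n, 1 ≤ p i ∧ p i ≤ m * (i : ℕ) + 1)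
    (hl : 2 ≤ luck m p) : ∃ k, k < n ∧ 1 ≤ k ∧ cnt p (m * k) = k := by
  have h2 : 1 < (Finset.univ.filter (fun i : Fin n => p i = m * (i : ℕ) + 1)).card := hl
  obtain ⟨i1, hi1, i2, hi2, hne⟩ := Finset.one_lt_card.mp h2
  simp only [Finset.mem_filter, Finset.mem_univ, true_and] at hi1 hi2
  -- one of i1 i2 has positive value
  have hex : ∃ i : Fin n, 1 ≤ (i : ℕ) ∧ p i = m * (i : ℕ) + 1 := by
    rcases Nat.eq_zero_or_pos (i1 : ℕ) with h0 | h0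
    · refine ⟨i2, ?_, hi2⟩
      have : (i1 : ℕ) ≠ (i2 : ℕ) := fun h => hne (Fin.ext h)
      omega
    · exact ⟨i1, h0, hi1⟩
  obtain ⟨i, hi1', hival⟩ := hex
  refine ⟨(i : ℕ), i.isLt, hi1', ?_⟩
  have heq : Finset.univ.filter (fun j : Fin n => p j ≤ m * (i : ℕ)) =
      Finset.univ.filter (fun j : Fin n => (j : ℕ) < (i : ℕ)) := by
    ext j
    simp only [Finset.mem_filter, Finset.mem_univ, true_and]
    constructor
    · intro hj
      by_contra hji
      push_neg at hji
      have := hmono (show i ≤ j from Fin.le_def.mpr hji)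
      omega
    · intro hj
      have h2' := (hpk j).2
      have h3 : m * ((j : ℕ) + 1) ≤ m * (i : ℕ) := Nat.mul_le_mul_left m hj
      have h4 : m * ((j : ℕ) + 1) = m * (j : ℕ) + m := Nat.mul_succ m (j : ℕ)
      omega
  unfold cnt
  rw [heq, card_lt_filter _ (le_of_lt i.isLt)]

def PhiF {n : ℕ} (p : Fin n → ℕ) (t v : ℕ) : Fin n → ℕ := fun i =>
  if h : (i : ℕ) + 1 < n ∧ (i : ℕ) < t then p ⟨(i : ℕ) + 1, h.1⟩
  else if (i : ℕ) = t then v else p i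

def PsiF {n : ℕ} (p : Fin n → ℕ) (t : ℕ) : Fin n → ℕ := fun i =>
  if (i : ℕ) = 0 then 1
  else if (i : ℕ) ≤ t then p ⟨(i : ℕ) - 1, Nat.lt_of_le_of_lt (Nat.sub_le _ _) i.isLt⟩
  else p i

lemma PhiF_lt {n : ℕ} (p : Fin n → ℕ) {t v : ℕ} {i : Fin n} (htn : t < n) (hi : (i : ℕ) < t) :
    PhiF p t v i = p ⟨(i : ℕ) + 1, by omega⟩ := by
  unfold PhiF
  rw [dif_pos ⟨by omega, hi⟩]

lemma PhiF_eq {n : ℕ} (p : Fin n → ℕ) {t v : ℕ} {i : Fin n} (hi : (i : ℕ) = t) :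
    PhiF p t v i = v := by
  unfold PhiF
  rw [dif_neg (by omega), if_pos hi]

lemma PhiF_gt {n : ℕ} (p : Fin n → ℕ) {t v : ℕ} {i : Fin n} (hi : t < (i : ℕ)) :
    PhiF p t v i = p i := by
  unfold PhiF
  rw [dif_neg (by omega), if_neg (by omega)]

lemma PsiF_zero {n : ℕ} (p : Fin n → ℕ) {t : ℕ} {i : Fin n} (hi : (i : ℕ) = 0) :
    PsiF p t i = 1 := by
  unfold PsiF
  rw [if_pos hi]

lemma PsiF_mid {n : ℕ} (p : Fin n → ℕ) {t : ℕ} {i : Fin n} (h0 : 0 < (i : ℕ))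
    (hi : (i : ℕ) ≤ t) :
    PsiF p t i = p ⟨(i : ℕ) - 1, Nat.lt_of_le_of_lt (Nat.sub_le _ _) i.isLt⟩ := by
  unfold PsiF
  rw [if_neg (by omega), if_pos hi]

lemma PsiF_gt {n : ℕ} (p : Fin n → ℕ) {t : ℕ} {i : Fin n} (hi : t < (i : ℕ)) :
    PsiF p t i = p i := by
  unfold PsiF
  rw [if_neg (by omega), if_neg (by omega)]

lemma Phi_spec {m n : ℕ} (hm : 1 ≤ m) {p : Fin n → ℕ} (hmono : Monotone p)
    (hpk : ∀ i : Fin n, 1 ≤ p i ∧ p i ≤ m * (i : ℕ) + 1)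
    (hb2 : 2 ≤ cnt p 1) {t : ℕ} (ht1 : 1 ≤ t) (ht2 : cnt p (m * t) = t + 1)
    (ht3 : ∀ k, 1 ≤ k → k < t → k + 2 ≤ cnt p (m * k)) :
    Monotone (PhiF p t (m * t + 1)) ∧
    (∀ i : Fin n, 1 ≤ PhiF p t (m * t + 1) i ∧ PhiF p t (m * t + 1) i ≤ m * (i : ℕ) + 1) ∧
    cnt (PhiF p t (m * t + 1)) 1 = cnt p 1 - 1 ∧
    luck m (PhiF p t (m * t + 1)) = luck m p + 1 ∧
    cnt (PhiF p t (m * t + 1)) (m * t) = t ∧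
    (∀ k, 1 ≤ k → k < t → k + 1 ≤ cnt (PhiF p t (m * t + 1)) (m * k)) ∧
    PsiF (PhiF p t (m * t + 1)) t = p := by
  have htn : t + 1 ≤ n := by rw [← ht2]; exact cnt_le p _
  have htn' : t < n := by omega
  have hcoe : ∀ (k : ℕ) (hk : k < n), ((⟨k, hk⟩ : Fin n) : ℕ) = k := fun _ _ => rfl
  have hmt1 : 1 ≤ m * t := Nat.one_le_iff_ne_zero.mpr (Nat.mul_ne_zero (by omega) (by omega))
  have h5 : ∀ i : Fin n, p i ≤ m * t ↔ (i : ℕ) < t + 1 := by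
    intro i; rw [lt_cnt_iff hmono, ht2]
  have h8 : ∀ i : Fin n, t + 1 ≤ (i : ℕ) → m * t + 1 ≤ p i := by
    intro i hi
    by_contra hcon
    push_neg at hcon
    have := (h5 i).mp (by omega)
    omega
  have hb_le : cnt p 1 ≤ t + 1 := by
    rw [← ht2]; exact cnt_mono p hmt1
  have hone : ∀ i : Fin n, p i = 1 ↔ (i : ℕ) < cnt p 1 := by
    intro i
    have h1 := (hpk i).1
    have h2 := lt_cnt_iff hmono 1 i
    constructor
    · intro h; exact h2.mp (by omega)
    · intro h; have := h2.mpr h; omega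
  have hp01 : ∀ i : Fin n, (i : ℕ) ≤ 1 → p i = 1 := fun i hi => (hone i).mpr (by omega)
  have hup2 : ∀ i : Fin n, 2 ≤ (i : ℕ) → (i : ℕ) < t + 1 → p i ≤ m * ((i : ℕ) - 1) := by
    intro i h2 hlt
    have h3 := ht3 ((i : ℕ) - 1) (by omega) (by omega)
    exact (lt_cnt_iff hmono (m * ((i : ℕ) - 1)) i).mpr (by omega)
  have hup2' : ∀ (j : ℕ) (hj : j + 1 < n), 1 ≤ j → j < t → p ⟨j + 1, hj⟩ ≤ m * j := by
    intro j hj h1 h2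
    exact hup2 ⟨j + 1, hj⟩ (by show 2 ≤ j + 1; omega) (by show j + 1 < t + 1; omega)
  have hnl : ∀ i : Fin n, 1 ≤ (i : ℕ) → (i : ℕ) < t + 1 → p i < m * (i : ℕ) + 1 := by
    intro i h1 hlt
    rcases Nat.lt_or_ge (i : ℕ) 2 with h | h
    · have hv := hp01 i (by omega)
      have hi1 : (i : ℕ) = 1 := by omega
      rw [hv, hi1]
      omega
    · have hv := hup2 i h hlt
      have hmm : m * ((i : ℕ) - 1) + m = m * (i : ℕ) := by
        rw [← Nat.mul_succ]
        congr 1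
        omega
      omega
  set q := PhiF p t (m * t + 1) with hqdef
  have hq_lt : ∀ (i : Fin n) (hit : (i : ℕ) < t), q i = p ⟨(i : ℕ) + 1, by omega⟩ :=
    fun i hit => PhiF_lt p htn' hit
  have hq_eq : ∀ (i : Fin n), (i : ℕ) = t → q i = m * t + 1 := fun i hi => PhiF_eq p hi
  have hq_gt : ∀ (i : Fin n), t < (i : ℕ) → q i = p i := fun i hi => PhiF_gt p hi
  -- monotonicity
  have hqmono : Monotone q := by
    intro i j hij
    have hij' : (i : ℕ) ≤ (j : ℕ) := Fin.le_def.mp hij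
    by_cases hjt : (j : ℕ) < t
    · rw [hq_lt i (by omega), hq_lt j hjt]
      exact hmono (Fin.mk_le_mk.mpr (by omega))
    · by_cases hit : (i : ℕ) < t
      · rw [hq_lt i hit]
        have hple : p ⟨(i : ℕ) + 1, by omega⟩ ≤ m * t :=
          (h5 _).mpr (by show (i : ℕ) + 1 < t + 1; omega)
        by_cases hjt2 : (j : ℕ) = t
        · rw [hq_eq j hjt2]; omega
        · rw [hq_gt j (by omega)]
          have := h8 j (by omega)
          omega
      · by_cases hit2 : (i : ℕ) = t
        · rw [hq_eq i hit2]
          by_cases hjt2 : (j : ℕ) = t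
          · rw [hq_eq j hjt2]
          · rw [hq_gt j (by omega)]
            exact h8 j (by omega)
        · rw [hq_gt i (by omega), hq_gt j (by omega)]
          exact hmono hij
  -- bounds
  have hqbd : ∀ i : Fin n, 1 ≤ q i ∧ q i ≤ m * (i : ℕ) + 1 := by
    intro i
    by_cases hit : (i : ℕ) < t
    · rw [hq_lt i hit]
      refine ⟨(hpk _).1, ?_⟩
      rcases Nat.eq_zero_or_pos (i : ℕ) with h0 | h0
      · have hv := hp01 ⟨(i : ℕ) + 1, by omega⟩ (by show (i : ℕ) + 1 ≤ 1; omega)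
        rw [hv]
        omega
      · have hv := hup2' (i : ℕ) (by omega) h0 hit
        have : m * (i : ℕ) ≤ m * (i : ℕ) + 1 := by omega
        omega
    · by_cases hit2 : (i : ℕ) = t
      · rw [hq_eq i hit2, hit2]
        omega
      · rw [hq_gt i (by omega)]
        exact hpk i
  -- ones count
  have hcnt1 : cnt q 1 = cnt p 1 - 1 := by
    have hset : (Finset.univ.filter (fun i : Fin n => q i ≤ 1)) =
        (Finset.univ.filter (fun i : Fin n => (i : ℕ) < cnt p 1 - 1)) := by
      ext i
      simp only [Finset.mem_filter, Finset.mem_univ, true_and]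
      by_cases hit : (i : ℕ) < t
      · rw [hq_lt i hit]
        have h : p ⟨(i : ℕ) + 1, by omega⟩ = 1 ↔ (i : ℕ) + 1 < cnt p 1 := hone _
        have h1 := (hpk ⟨(i : ℕ) + 1, by omega⟩).1
        constructor
        · intro hle
          have h2 := h.mp (by omega)
          omega
        · intro hlt
          have h2 := h.mpr (by omega)
          omega
      · by_cases hit2 : (i : ℕ) = t
        · rw [hq_eq i hit2]
          constructor
          · intro hle; omega
          · intro hlt; omega
        · rw [hq_gt i (by omega)]
          have := h8 i (by omega)
          constructor
          · intro hle; omega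
          · intro hlt; omega
    exact (congrArg Finset.card hset).trans (card_lt_filter _ (by have := cnt_le p 1; omega))
  -- luck
  have hluck : luck m q = luck m p + 1 := by
    have hnotmem : (⟨t, htn'⟩ : Fin n) ∉
        (Finset.univ.filter (fun i : Fin n => p i = m * (i : ℕ) + 1)) := by
      simp only [Finset.mem_filter, Finset.mem_univ, true_and]
      have := (h5 ⟨t, htn'⟩).mpr (by show t < t + 1; omega)
      omega
    have hset : (Finset.univ.filter (fun i : Fin n => q i = m * (i : ℕ) + 1)) =
        insert ⟨t, htn'⟩ (Finset.univ.filter (fun i : Fin n => p i = m * (i : ℕ) + 1)) := by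
      ext i
      simp only [Finset.mem_filter, Finset.mem_univ, true_and, Finset.mem_insert]
      have hfe : (i = ⟨t, htn'⟩) ↔ (i : ℕ) = t :=
        ⟨fun h => by rw [h], fun h => Fin.ext h⟩
      by_cases hit : (i : ℕ) < t
      · rw [hq_lt i hit, hfe]
        rcases Nat.eq_zero_or_pos (i : ℕ) with h0 | h0
        · have hv := hp01 ⟨(i : ℕ) + 1, by omega⟩ (by show (i : ℕ) + 1 ≤ 1; omega)
          have hv0 := hp01 i (by omega)
          rw [hv, hv0, h0]
          constructor
          · intro _; right; omega
          · intro _; omega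
        · have hv := hup2' (i : ℕ) (by omega) h0 hit
          have hnl2 := hnl i (by omega) (by omega)
          constructor
          · intro hv2
            exfalso
            omega
          · intro hv2
            rcases hv2 with hv2 | hv2
            · omega
            · omega
      · by_cases hit2 : (i : ℕ) = t
        · rw [hq_eq i hit2, hfe, hit2]
          constructor
          · intro _; left; rfl
          · intro _; rfl
        · rw [hq_gt i (by omega), hfe]
          constructor
          · intro hv; right; exact hv
          · intro hv
            rcases hv with hv | hv
            · omega
            · exact hv
    calc luck m q = (insert (⟨t, htn'⟩ : Fin n)
        (Finset.univ.filter (fun i : Fin n => p i = m * (i : ℕ) + 1))).card := by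
          unfold luck; rw [hset]
    _ = luck m p + 1 := Finset.card_insert_of_notMem hnotmem
  have hcnt5 : cnt q (m * t) = t := by
    have hset : (Finset.univ.filter (fun i : Fin n => q i ≤ m * t)) =
        (Finset.univ.filter (fun i : Fin n => (i : ℕ) < t)) := by
      ext i
      simp only [Finset.mem_filter, Finset.mem_univ, true_and]
      by_cases hit : (i : ℕ) < t
      · rw [hq_lt i hit]
        have hv : p ⟨(i : ℕ) + 1, by omega⟩ ≤ m * t :=
          (h5 _).mpr (by show (i : ℕ) + 1 < t + 1; omega)
        constructor
        · intro _; exact hit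
        · intro _; exact hv
      · by_cases hit2 : (i : ℕ) = t
        · rw [hq_eq i hit2]
          constructor
          · intro h; omega
          · intro h; omega
        · rw [hq_gt i (by omega)]
          have := h8 i (by omega)
          constructor
          · intro h; omega
          · intro h; omega
    exact (congrArg Finset.card hset).trans (card_lt_filter _ (by omega))
  have hcnt6 : ∀ k, 1 ≤ k → k < t → k + 1 ≤ cnt q (m * k) := by
    intro k hk1 hkt
    have hc2 : k + 2 ≤ cnt p (m * k) := ht3 k hk1 hkt
    have hct : cnt p (m * k) ≤ t + 1 := by
      rw [← ht2]; exact cnt_mono p (Nat.mul_le_mul_left m (by omega))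
    have hmk : m * k ≤ m * t := Nat.mul_le_mul_left m (by omega)
    have hset : (Finset.univ.filter (fun i : Fin n => q i ≤ m * k)) =
        (Finset.univ.filter (fun i : Fin n => (i : ℕ) < cnt p (m * k) - 1)) := by
      ext i
      simp only [Finset.mem_filter, Finset.mem_univ, true_and]
      by_cases hit : (i : ℕ) < t
      · rw [hq_lt i hit]
        have hiff : p ⟨(i : ℕ) + 1, by omega⟩ ≤ m * k ↔ (i : ℕ) + 1 < cnt p (m * k) :=
          lt_cnt_iff hmono (m * k) _
        constructor
        · intro hle
          have := hiff.mp hle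
          omega
        · intro hlt
          exact hiff.mpr (by omega)
      · by_cases hit2 : (i : ℕ) = t
        · rw [hq_eq i hit2]
          constructor
          · intro h; omega
          · intro h; omega
        · rw [hq_gt i (by omega)]
          have := h8 i (by omega)
          constructor
          · intro h; omega
          · intro h; omega
    have heq : cnt q (m * k) = cnt p (m * k) - 1 :=
      (congrArg Finset.card hset).trans (card_lt_filter _ (by have := cnt_le p (m * k); omega))
    omega
  have hcomp : PsiF q t = p := by
    funext i
    by_cases h0 : (i : ℕ) = 0
    · rw [PsiF_zero q h0]
      exact (hp01 i (by omega)).symm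
    · by_cases hit : (i : ℕ) ≤ t
      · rw [PsiF_mid q (by omega) hit]
        rw [hq_lt ⟨(i : ℕ) - 1, Nat.lt_of_le_of_lt (Nat.sub_le _ _) i.isLt⟩
          (show (i : ℕ) - 1 < t by omega)]
        congr 1
        apply Fin.ext
        show (i : ℕ) - 1 + 1 = (i : ℕ)
        omega
      · rw [PsiF_gt q (by omega)]
        exact hq_gt i (by omega)
  exact ⟨hqmono, hqbd, hcnt1, hluck, hcnt5, hcnt6, hcomp⟩

lemma Psi_spec {m n : ℕ} (hm : 1 ≤ m) {p : Fin n → ℕ} (hmono : Monotone p)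
    (hpk : ∀ i : Fin n, 1 ≤ p i ∧ p i ≤ m * (i : ℕ) + 1)
    (hc1 : 1 ≤ cnt p 1) {t : ℕ} (ht1 : 1 ≤ t) (htn' : t < n) (ht2 : cnt p (m * t) = t)
    (ht3 : ∀ k, 1 ≤ k → k < t → k + 1 ≤ cnt p (m * k)) :
    Monotone (PsiF p t) ∧
    (∀ i : Fin n, 1 ≤ PsiF p t i ∧ PsiF p t i ≤ m * (i : ℕ) + 1) ∧
    cnt (PsiF p t) 1 = cnt p 1 + 1 ∧
    luck m p = luck m (PsiF p t) + 1 ∧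
    cnt (PsiF p t) (m * t) = t + 1 ∧
    (∀ k, 1 ≤ k → k < t → k + 2 ≤ cnt (PsiF p t) (m * k)) ∧
    PhiF (PsiF p t) t (m * t + 1) = p := by
  have hmt1 : 1 ≤ m * t := Nat.one_le_iff_ne_zero.mpr (Nat.mul_ne_zero (by omega) (by omega))
  have g5 : ∀ i : Fin n, p i ≤ m * t ↔ (i : ℕ) < t := by
    intro i; rw [lt_cnt_iff hmono, ht2]
  have g2 : p ⟨t, htn'⟩ = m * t + 1 := by
    have hub : p ⟨t, htn'⟩ ≤ m * t + 1 := (hpk ⟨t, htn'⟩).2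
    by_contra hne
    have hle : p ⟨t, htn'⟩ ≤ m * t := by omega
    have h2 := (g5 ⟨t, htn'⟩).mp hle
    exact absurd h2 (by show ¬ (t < t); omega)
  have g8 : ∀ i : Fin n, t ≤ (i : ℕ) → m * t + 1 ≤ p i := by
    intro i hi
    have h := hmono (show (⟨t, htn'⟩ : Fin n) ≤ i from
      Fin.le_def.mpr (by show t ≤ (i : ℕ); exact hi))
    omega
  have gup : ∀ i : Fin n, 1 ≤ (i : ℕ) → (i : ℕ) < t → p i ≤ m * (i : ℕ) := by
    intro i h1 h2
    exact (lt_cnt_iff hmono _ i).mpr (by have := ht3 (i : ℕ) h1 h2; omega)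
  have gc_le : cnt p 1 ≤ t := by rw [← ht2]; exact cnt_mono p hmt1
  have hone : ∀ i : Fin n, p i = 1 ↔ (i : ℕ) < cnt p 1 := by
    intro i
    have h1 := (hpk i).1
    have h2 := lt_cnt_iff hmono 1 i
    constructor
    · intro h; exact h2.mp (by omega)
    · intro h; have := h2.mpr h; omega
  have hp0 : ∀ i : Fin n, (i : ℕ) = 0 → p i = 1 := fun i hi => (hone i).mpr (by omega)
  set q := PsiF p t with hqdef
  have hq0 : ∀ i : Fin n, (i : ℕ) = 0 → q i = 1 := fun i hi => PsiF_zero p hi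
  have hqm : ∀ (i : Fin n) (h0 : 0 < (i : ℕ)) (hit : (i : ℕ) ≤ t),
      q i = p ⟨(i : ℕ) - 1, Nat.lt_of_le_of_lt (Nat.sub_le _ _) i.isLt⟩ :=
    fun i h0 hit => PsiF_mid p h0 hit
  have hqg : ∀ i : Fin n, t < (i : ℕ) → q i = p i := fun i hi => PsiF_gt p hi
  -- bounds
  have hqbd : ∀ i : Fin n, 1 ≤ q i ∧ q i ≤ m * (i : ℕ) + 1 := by
    intro i
    rcases Nat.eq_zero_or_pos (i : ℕ) with h0 | h0
    · rw [hq0 i h0]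
      omega
    · by_cases hit : (i : ℕ) ≤ t
      · rw [hqm i h0 hit]
        refine ⟨(hpk _).1, ?_⟩
        have hub : p ⟨(i : ℕ) - 1, Nat.lt_of_le_of_lt (Nat.sub_le _ _) i.isLt⟩ ≤
            m * ((i : ℕ) - 1) + 1 := (hpk _).2
        have hmul : m * ((i : ℕ) - 1) + m = m * (i : ℕ) := by
          rw [← Nat.mul_succ]
          congr 1
          omega
        omega
      · rw [hqg i (by omega)]
        exact hpk i
  -- monotone
  have hqmono : Monotone q := by
    intro i j hij
    have hij' : (i : ℕ) ≤ (j : ℕ) := Fin.le_def.mp hij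
    rcases Nat.eq_zero_or_pos (i : ℕ) with h0 | h0
    · rw [hq0 i h0]
      exact (hqbd j).1
    · by_cases hjt : (j : ℕ) ≤ t
      · rw [hqm i h0 (by omega), hqm j (by omega) hjt]
        exact hmono (Fin.mk_le_mk.mpr (by omega))
      · rw [hqg j (by omega)]
        by_cases hit : (i : ℕ) ≤ t
        · rw [hqm i h0 hit]
          exact hmono (Fin.le_def.mpr (by show (i : ℕ) - 1 ≤ (j : ℕ); omega))
        · rw [hqg i (by omega)]
          exact hmono hij
  -- ones
  have hcnt1 : cnt q 1 = cnt p 1 + 1 := by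
    have hset : (Finset.univ.filter (fun i : Fin n => q i ≤ 1)) =
        (Finset.univ.filter (fun i : Fin n => (i : ℕ) < cnt p 1 + 1)) := by
      ext i
      simp only [Finset.mem_filter, Finset.mem_univ, true_and]
      rcases Nat.eq_zero_or_pos (i : ℕ) with h0 | h0
      · rw [hq0 i h0, h0]
        constructor
        · intro _; omega
        · intro _; omega
      · by_cases hit : (i : ℕ) ≤ t
        · rw [hqm i h0 hit]
          have h : p ⟨(i : ℕ) - 1, Nat.lt_of_le_of_lt (Nat.sub_le _ _) i.isLt⟩ = 1 ↔
              (i : ℕ) - 1 < cnt p 1 := hone _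
          have h1 : 1 ≤ p ⟨(i : ℕ) - 1, Nat.lt_of_le_of_lt (Nat.sub_le _ _) i.isLt⟩ :=
            (hpk _).1
          constructor
          · intro hle
            have h2 := h.mp (by omega)
            omega
          · intro hlt
            have h2 := h.mpr (by omega)
            omega
        · rw [hqg i (by omega)]
          have := g8 i (by omega)
          constructor
          · intro h; omega
          · intro h; omega
    exact (congrArg Finset.card hset).trans (card_lt_filter _ (by omega))
  -- luck
  have hluck : luck m p = luck m q + 1 := by
    have hnotmem : (⟨t, htn'⟩ : Fin n) ∉
        (Finset.univ.filter (fun i : Fin n => q i = m * (i : ℕ) + 1)) := by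
      simp only [Finset.mem_filter, Finset.mem_univ, true_and]
      rw [hqm ⟨t, htn'⟩ (by show 0 < t; omega) (by show t ≤ t; omega)]
      have hub : p ⟨(t : ℕ) - 1, by omega⟩ ≤ m * (t - 1) + 1 := (hpk _).2
      have hmul : m * (t - 1) + m = m * t := by
        rw [← Nat.mul_succ]
        congr 1
        omega
      show ¬ (p ⟨(t : ℕ) - 1, by omega⟩ = m * t + 1)
      omega
    have hset : (Finset.univ.filter (fun i : Fin n => p i = m * (i : ℕ) + 1)) =
        insert ⟨t, htn'⟩ (Finset.univ.filter (fun i : Fin n => q i = m * (i : ℕ) + 1)) := by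
      ext i
      simp only [Finset.mem_filter, Finset.mem_univ, true_and, Finset.mem_insert]
      have hfe : (i = ⟨t, htn'⟩) ↔ (i : ℕ) = t :=
        ⟨fun h => by rw [h], fun h => Fin.ext h⟩
      rcases Nat.eq_zero_or_pos (i : ℕ) with h0 | h0
      · rw [hp0 i h0, hq0 i h0, hfe, h0]
        simp
      · by_cases hit : (i : ℕ) < t
        · have hnl := gup i (by omega) hit
          rw [hqm i h0 (by omega), hfe]
          have hub : p ⟨(i : ℕ) - 1, Nat.lt_of_le_of_lt (Nat.sub_le _ _) i.isLt⟩ ≤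
              m * ((i : ℕ) - 1) + 1 := (hpk _).2
          have hmul : m * ((i : ℕ) - 1) + m = m * (i : ℕ) := by
            rw [← Nat.mul_succ]
            congr 1
            omega
          constructor
          · intro hv; exfalso; omega
          · intro hv
            rcases hv with hv | hv
            · omega
            · exfalso; omega
        · by_cases hit2 : (i : ℕ) = t
          · have hieq : i = ⟨t, htn'⟩ := Fin.ext hit2
            have hv : p i = m * t + 1 := by rw [hieq]; exact g2
            rw [hfe, hit2]
            constructor
            · intro _; left; rfl
            · intro _; exact hv
          · rw [hqg i (by omega), hfe]
            constructor
            · intro hv; right; exact hv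
            · intro hv
              rcases hv with hv | hv
              · omega
              · exact hv
    calc luck m p = (insert (⟨t, htn'⟩ : Fin n)
        (Finset.univ.filter (fun i : Fin n => q i = m * (i : ℕ) + 1))).card := by
          unfold luck; rw [← hset]
    _ = luck m q + 1 := Finset.card_insert_of_notMem hnotmem
  -- cnt at m*t
  have hcnt5 : cnt q (m * t) = t + 1 := by
    have hset : (Finset.univ.filter (fun i : Fin n => q i ≤ m * t)) =
        (Finset.univ.filter (fun i : Fin n => (i : ℕ) < t + 1)) := by
      ext i
      simp only [Finset.mem_filter, Finset.mem_univ, true_and]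
      rcases Nat.eq_zero_or_pos (i : ℕ) with h0 | h0
      · rw [hq0 i h0, h0]
        constructor
        · intro _; omega
        · intro _; omega
      · by_cases hit : (i : ℕ) ≤ t
        · rw [hqm i h0 hit]
          have hv : p ⟨(i : ℕ) - 1, Nat.lt_of_le_of_lt (Nat.sub_le _ _) i.isLt⟩ ≤ m * t ↔
              (i : ℕ) - 1 < t := g5 _
          constructor
          · intro _; omega
          · intro _; exact hv.mpr (by omega)
        · rw [hqg i (by omega)]
          have := g8 i (by omega)
          constructor
          · intro h; omega
          · intro h; omega
    exact (congrArg Finset.card hset).trans (card_lt_filter _ (by omega))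
  -- cnt below t
  have hcnt6 : ∀ k, 1 ≤ k → k < t → k + 2 ≤ cnt q (m * k) := by
    intro k hk1 hkt
    have hck : k + 1 ≤ cnt p (m * k) := ht3 k hk1 hkt
    have hck2 : cnt p (m * k) ≤ t := by
      rw [← ht2]; exact cnt_mono p (Nat.mul_le_mul_left m (by omega))
    have hmk : m * k ≤ m * t := Nat.mul_le_mul_left m (by omega)
    have hmk1 : 1 ≤ m * k := Nat.one_le_iff_ne_zero.mpr (Nat.mul_ne_zero (by omega) (by omega))
    have hset : (Finset.univ.filter (fun i : Fin n => q i ≤ m * k)) =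
        (Finset.univ.filter (fun i : Fin n => (i : ℕ) < cnt p (m * k) + 1)) := by
      ext i
      simp only [Finset.mem_filter, Finset.mem_univ, true_and]
      rcases Nat.eq_zero_or_pos (i : ℕ) with h0 | h0
      · rw [hq0 i h0, h0]
        constructor
        · intro _; omega
        · intro _; omega
      · by_cases hit : (i : ℕ) ≤ t
        · rw [hqm i h0 hit]
          have hiff : p ⟨(i : ℕ) - 1, Nat.lt_of_le_of_lt (Nat.sub_le _ _) i.isLt⟩ ≤ m * k ↔
              (i : ℕ) - 1 < cnt p (m * k) := lt_cnt_iff hmono _ _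
          constructor
          · intro hle
            have := hiff.mp hle
            omega
          · intro hlt
            exact hiff.mpr (by omega)
        · rw [hqg i (by omega)]
          have := g8 i (by omega)
          constructor
          · intro h; omega
          · intro h; omega
    have heq : cnt q (m * k) = cnt p (m * k) + 1 :=
      (congrArg Finset.card hset).trans (card_lt_filter _ (by omega))
    omega
  -- composition
  have hcomp : PhiF q t (m * t + 1) = p := by
    funext i
    by_cases hit : (i : ℕ) < t
    · rw [PhiF_lt q htn' hit]
      have hpf : (i : ℕ) + 1 < n := by omega
      have e1 : q ⟨(i : ℕ) + 1, hpf⟩ = p i := by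
        rw [hqm ⟨(i : ℕ) + 1, hpf⟩ (by show 0 < (i : ℕ) + 1; omega)
          (by show (i : ℕ) + 1 ≤ t; omega)]
        congr 1
      exact e1
    · by_cases hit2 : (i : ℕ) = t
      · rw [PhiF_eq q hit2]
        have hieq : i = ⟨t, htn'⟩ := Fin.ext hit2
        rw [hieq]
        exact g2.symm
      · rw [PhiF_gt q (by omega)]
        exact hqg i (by omega)
  exact ⟨hqmono, hqbd, hcnt1, hluck, hcnt5, hcnt6, hcomp⟩

lemma keyA (m : ℕ) (hm : 1 ≤ m) (n x b : ℕ) (hx : 1 ≤ x) (hb : 2 ≤ b) :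
    ((PK m n).filter (fun p => luck m p = x ∧ freq 1 p = b)).card =
      ((PK m n).filter (fun p => luck m p = x + 1 ∧ freq 1 p = b - 1)).card := by
  classical
  have ex1 : ∀ p : Fin n → ℕ, p ∈ (PK m n).filter (fun p => luck m p = x ∧ freq 1 p = b) →
      ∃ k, 1 ≤ k ∧ cnt p (m * k) = k + 1 := by
    intro p hp
    rw [Finset.mem_filter, mem_PK_iff] at hp
    obtain ⟨⟨hmono, hpk⟩, hlk, hfr⟩ := hp
    have hcb : cnt p 1 = b := by rw [← freq_eq_cnt hpk]; exact hfr
    exact exists_t1 hm hpk (by omega)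
  have ex2 : ∀ p : Fin n → ℕ,
      p ∈ (PK m n).filter (fun p => luck m p = x + 1 ∧ freq 1 p = b - 1) →
      ∃ k, (k < n ∧ 1 ≤ k) ∧ cnt p (m * k) = k := by
    intro p hp
    rw [Finset.mem_filter, mem_PK_iff] at hp
    obtain ⟨⟨hmono, hpk⟩, hlk, hfr⟩ := hp
    obtain ⟨k, hkn, hk1, hck⟩ := exists_t2 hm hmono hpk (by omega)
    exact ⟨k, ⟨hkn, hk1⟩, hck⟩
  refine Finset.card_bij'
    (fun p hp => PhiF p (Nat.find (ex1 p hp)) (m * Nat.find (ex1 p hp) + 1))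
    (fun p hp => PsiF p (Nat.find (ex2 p hp))) ?_ ?_ ?_ ?_
  · intro p hp
    have hmem := hp
    rw [Finset.mem_filter, mem_PK_iff] at hmem
    obtain ⟨⟨hmono, hpk⟩, hlk, hfr⟩ := hmem
    have hcb : cnt p 1 = b := by rw [← freq_eq_cnt hpk]; exact hfr
    obtain ⟨ht1, ht2⟩ := Nat.find_spec (ex1 p hp)
    have ht3 := t1_lower (p := p) (by omega) hm (fun k hk => Nat.find_min (ex1 p hp) hk)
    obtain ⟨hqmono, hqbd, hqcnt1, hqluck, _, _, _⟩ :=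
      Phi_spec hm hmono hpk (by omega) ht1 ht2 ht3
    rw [Finset.mem_filter, mem_PK_iff]
    refine ⟨⟨hqmono, hqbd⟩, ?_, ?_⟩
    · rw [hqluck, hlk]
    · rw [freq_eq_cnt hqbd, hqcnt1, hcb]
  · intro p hp
    have hmem := hp
    rw [Finset.mem_filter, mem_PK_iff] at hmem
    obtain ⟨⟨hmono, hpk⟩, hlk, hfr⟩ := hmem
    have hcb : cnt p 1 = b - 1 := by rw [← freq_eq_cnt hpk]; exact hfr
    obtain ⟨⟨hkn, hk1⟩, hck⟩ := Nat.find_spec (ex2 p hp)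
    have ht3 : ∀ k, 1 ≤ k → k < Nat.find (ex2 p hp) → k + 1 ≤ cnt p (m * k) := by
      intro k hk1' hklt
      have hne := Nat.find_min (ex2 p hp) hklt
      have hpark : k ≤ cnt p (m * k) := cnt_park hm hpk (by omega)
      have hne2 : cnt p (m * k) ≠ k := fun h => hne ⟨⟨by omega, hk1'⟩, h⟩
      omega
    obtain ⟨hqmono, hqbd, hqcnt1, hqluck, _, _, _⟩ :=
      Psi_spec hm hmono hpk (by omega) hk1 hkn hck ht3
    rw [Finset.mem_filter, mem_PK_iff]
    refine ⟨⟨hqmono, hqbd⟩, ?_, ?_⟩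
    · show luck m (PsiF p (Nat.find (ex2 p hp))) = x
      omega
    · rw [freq_eq_cnt hqbd, hqcnt1, hcb]
      omega
  · intro p hp
    have hmem := hp
    rw [Finset.mem_filter, mem_PK_iff] at hmem
    obtain ⟨⟨hmono, hpk⟩, hlk, hfr⟩ := hmem
    have hcb : cnt p 1 = b := by rw [← freq_eq_cnt hpk]; exact hfr
    obtain ⟨ht1, ht2⟩ := Nat.find_spec (ex1 p hp)
    have ht3 := t1_lower (p := p) (by omega) hm (fun k hk => Nat.find_min (ex1 p hp) hk)
    obtain ⟨hqmono, hqbd, hqcnt1, hqluck, hq5, hq6, hcomp⟩ :=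
      Phi_spec hm hmono hpk (by omega) ht1 ht2 ht3
    have hTn : Nat.find (ex1 p hp) < n := by
      have := cnt_le p (m * Nat.find (ex1 p hp))
      omega
    have key : ∀ (h : ∃ k, (k < n ∧ 1 ≤ k) ∧
        cnt (PhiF p (Nat.find (ex1 p hp)) (m * Nat.find (ex1 p hp) + 1)) (m * k) = k),
        Nat.find h = Nat.find (ex1 p hp) := by
      intro h
      rw [Nat.find_eq_iff]
      refine ⟨⟨⟨hTn, ht1⟩, hq5⟩, ?_⟩
      intro k hk
      rintro ⟨⟨hkn', hk1'⟩, hck'⟩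
      have := hq6 k hk1' hk
      omega
    beta_reduce
    rw [key]
    exact hcomp
  · intro p hp
    have hmem := hp
    rw [Finset.mem_filter, mem_PK_iff] at hmem
    obtain ⟨⟨hmono, hpk⟩, hlk, hfr⟩ := hmem
    have hcb : cnt p 1 = b - 1 := by rw [← freq_eq_cnt hpk]; exact hfr
    obtain ⟨⟨hkn, hk1⟩, hck⟩ := Nat.find_spec (ex2 p hp)
    have ht3 : ∀ k, 1 ≤ k → k < Nat.find (ex2 p hp) → k + 1 ≤ cnt p (m * k) := by
      intro k hk1' hklt
      have hne := Nat.find_min (ex2 p hp) hklt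
      have hpark : k ≤ cnt p (m * k) := cnt_park hm hpk (by omega)
      have hne2 : cnt p (m * k) ≠ k := fun h => hne ⟨⟨by omega, hk1'⟩, h⟩
      omega
    obtain ⟨hqmono, hqbd, hqcnt1, hqluck, hq5, hq6, hcomp⟩ :=
      Psi_spec hm hmono hpk (by omega) hk1 hkn hck ht3
    have key : ∀ (h : ∃ k, 1 ≤ k ∧
        cnt (PsiF p (Nat.find (ex2 p hp))) (m * k) = k + 1),
        Nat.find h = Nat.find (ex2 p hp) := by
      intro h
      rw [Nat.find_eq_iff]
      refine ⟨⟨hk1, hq5⟩, ?_⟩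
      intro k hk
      rintro ⟨hk1', hck'⟩
      have := hq6 k hk1' hk
      omega
    beta_reduce
    rw [key]
    exact hcomp

lemma zeroA1 (m : ℕ) (n c : ℕ) (hc : 1 ≤ c) :
    ((PK m n).filter (fun p => luck m p = 0 ∧ freq 1 p = c)).card = 0 := by
  rw [Finset.card_eq_zero, Finset.filter_eq_empty_iff]
  intro p hp
  rintro ⟨h1, h2⟩
  have h := luck_pos_iff (m := m) hp
  have := h.mpr (by omega)
  omega

lemma zeroA2 (m : ℕ) (n c : ℕ) (hc : 1 ≤ c) :
    ((PK m n).filter (fun p => luck m p = c ∧ freq 1 p = 0)).card = 0 := by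
  rw [Finset.card_eq_zero, Finset.filter_eq_empty_iff]
  intro p hp
  rintro ⟨h1, h2⟩
  have h := luck_pos_iff (m := m) hp
  have := h.mp (by omega)
  omega

end Stmt10Aux

theorem stmt10 (m : ℕ) (hm : 1 ≤ m) (n a b : ℕ) :
    ((PK m n).filter (fun p => luck m p = a ∧ freq 1 p = b)).card =
      ((PK m n).filter (fun p => luck m p = b ∧ freq 1 p = a)).card := by
  have aux : ∀ e a' b' : ℕ, b' = a' + e →
      ((PK m n).filter (fun p => luck m p = a' ∧ freq 1 p = b')).card =
      ((PK m n).filter (fun p => luck m p = b' ∧ freq 1 p = a')).card := by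
    intro e
    induction e using Nat.strong_induction_on with
    | _ e IH =>
      intro a' b' hab
      rcases Nat.eq_zero_or_pos e with he0 | he0
      · subst he0
        have hba : b' = a' := by omega
        subst hba
        rfl
      · rcases Nat.eq_zero_or_pos a' with ha0 | ha0
        · subst ha0
          have hb' : 1 ≤ b' := by omega
          rw [Stmt10Aux.zeroA1 m n b' hb', Stmt10Aux.zeroA2 m n b' hb']
        · rcases Nat.lt_or_ge e 2 with he1 | he2
          · have h1 := Stmt10Aux.keyA m hm n a' b' (by omega) (by omega)
            rw [h1]
            have e2 : a' + 1 = b' := by omega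
            have e3 : b' - 1 = a' := by omega
            rw [e2, e3]
          · have h1 := Stmt10Aux.keyA m hm n a' b' (by omega) (by omega)
            have h2 := IH (e - 2) (by omega) (a' + 1) (b' - 1) (by omega)
            have h3 := Stmt10Aux.keyA m hm n (b' - 1) (a' + 1) (by omega) (by omega)
            rw [h1, h2, h3]
            have e2 : b' - 1 + 1 = b' := by omega
            have e3 : a' + 1 - 1 = a' := by omega
            rw [e2, e3]
  rcases Nat.le_total a b with h | h
  · obtain ⟨e, he⟩ := Nat.exists_eq_add_of_le h
    exact aux e a b he
  · obtain ⟨e, he⟩ := Nat.exists_eq_add_of_le h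
    exact (aux e b a he).symm

end
end
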